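/- Suppose C(t) is nonempty and convex for every t ∈ [0,T], and A₀ is coercive with modulus α₀ > 0, i.e. ⟨A₀ x, x⟩ ≥ α₀‖x‖² for all x ∈ H. If x and y are solutions of the sweeping process (P) with initial values x₀ ∈ C(0) and y₀ ∈ C(0) respectively, then ‖x(t) − y(t)‖ ≤ √(‖A₀‖/α₀) · ‖x₀ − y₀‖ for every t ∈ [0,T]. In particular, the map sending an initial value to the (unique) solution is Lipschitz continuous from C(0) into C⁰([0,T],H) with modulus √(‖A₀‖/α₀). -/

import Mathlib

open MeasureTheory Set
open scoped RealInnerProductSpace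

/-- `u` (with Bochner-integrable derivative `v`) is a solution of the sweeping process (P)
with velocity constraint `C`, data `A₀, A₁, f`, and initial value `u₀` on `[0,T]`. -/
def SweepSol {H : Type*} [NormedAddCommGroup H] [InnerProductSpace ℝ H]
    (T : ℝ) (A₀ A₁ : H →L[ℝ] H) (f : ℝ → H) (C : ℝ → Set H)
    (u₀ : H) (u v : ℝ → H) : Prop :=
  IntegrableOn v (Icc 0 T) ∧
  (∀ t ∈ Icc (0:ℝ) T, u t = u₀ + ∫ τ in (0:ℝ)..t, v τ) ∧
  (∀ᵐ t ∂(volume.restrict (Icc (0:ℝ) T)),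
    v t ∈ C t ∧ ∀ z ∈ C t, 0 ≤ ⟪A₁ (v t) + A₀ (u t) - f t, z - v t⟫)


lemma fubini_quad {H : Type*} [NormedAddCommGroup H] [InnerProductSpace ℝ H] [CompleteSpace H]
    (A : H →L[ℝ] H) (hsym : ∀ a b : H, ⟪A a, b⟫ = ⟪a, A b⟫)
    (t : ℝ) (ht : 0 ≤ t) (g : ℝ → H) (hg : IntegrableOn g (Icc 0 t)) :
    ⟪A (∫ τ in Icc (0:ℝ) t, g τ), ∫ τ in Icc (0:ℝ) t, g τ⟫
      = 2 * ∫ s in Icc (0:ℝ) t, ⟪A (∫ τ in Icc (0:ℝ) s, g τ), g s⟫ := by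
  set μ := volume.restrict (Icc (0:ℝ) t) with hμ
  have hgi : Integrable g μ := hg
  set W : ℝ → H := fun s => ∫ τ in Icc (0:ℝ) s, g τ with hW
  -- continuity of W on Icc 0 t
  have hWcont : ContinuousOn W (Icc 0 t) := intervalIntegral.continuousOn_primitive_Icc hg
  have hWm : AEStronglyMeasurable W μ :=
    hWcont.aestronglyMeasurable measurableSet_Icc
  obtain ⟨M, hM⟩ := isCompact_Icc.exists_bound_of_continuousOn hWcont
  have hM0 : 0 ≤ M := le_trans (norm_nonneg _) (hM 0 ⟨le_refl 0, ht⟩)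
  -- restriction identity
  have hres : ∀ s ∈ Icc (0:ℝ) t, μ.restrict (Iic s) = volume.restrict (Icc (0:ℝ) s) := by
    intro s hs
    rw [hμ, Measure.restrict_restrict measurableSet_Iic]
    congr 1
    ext τ
    simp only [mem_inter_iff, mem_Iic, mem_Icc]
    exact ⟨fun ⟨h1, h2, _⟩ => ⟨h2, h1⟩, fun ⟨h1, h2⟩ => ⟨h2, h1, h2.trans hs.2⟩⟩
  have hresI : ∀ s ∈ Icc (0:ℝ) t, μ.restrict (Ici s) = volume.restrict (Icc s t) := by
    intro s hs
    rw [hμ, Measure.restrict_restrict measurableSet_Ici]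
    congr 1
    ext τ
    simp only [mem_inter_iff, mem_Ici, mem_Icc]
    exact ⟨fun ⟨h1, _, h3⟩ => ⟨h1, h3⟩, fun ⟨h1, h2⟩ => ⟨h1, hs.1.trans h1, h2⟩⟩
  -- the kernel
  set K : ℝ × ℝ → ℝ := fun p => ⟪A (g p.1), g p.2⟫ with hK
  have hKm : AEStronglyMeasurable K (μ.prod μ) :=
    (((A.continuous.comp_aestronglyMeasurable hgi.1).comp_fst).inner hgi.1.comp_snd :
      AEStronglyMeasurable (fun p : ℝ × ℝ => ⟪A (g p.1), g p.2⟫) (μ.prod μ))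
  have hKi : Integrable K (μ.prod μ) := by
    refine Integrable.mono' ((hgi.norm.mul_prod hgi.norm).const_mul ‖A‖) hKm ?_
    refine Filter.Eventually.of_forall fun p => ?_
    calc ‖K p‖ ≤ ‖A (g p.1)‖ * ‖g p.2‖ := norm_inner_le_norm _ _
    _ ≤ (‖A‖ * ‖g p.1‖) * ‖g p.2‖ :=
        mul_le_mul_of_nonneg_right (A.le_opNorm _) (norm_nonneg _)
    _ = ‖A‖ * (‖g p.1‖ * ‖g p.2‖) := by ring
  set S : Set (ℝ × ℝ) := {p | p.2 ≤ p.1} with hS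
  have hSm : MeasurableSet S := measurableSet_le measurable_snd measurable_fst
  set G : ℝ × ℝ → ℝ := S.indicator K with hG
  have hGi : Integrable G (μ.prod μ) := hKi.indicator hSm
  -- first computation
  have e1 : ∫ p, G p ∂(μ.prod μ) = ∫ s, ⟪A (g s), W s⟫ ∂μ := by
    rw [integral_prod _ hGi]
    rw [hμ]
    refine setIntegral_congr_fun measurableSet_Icc fun s hs => ?_
    have : (fun τ => G (s, τ)) = (Iic s).indicator (fun τ => K (s, τ)) := by
      ext τ
      simp only [hG, Set.indicator_apply, hS, mem_setOf_eq, mem_Iic]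
    rw [← hμ, this, integral_indicator measurableSet_Iic, hres s hs]
    show ∫ τ in Icc (0:ℝ) s, ⟪A (g s), g τ⟫ = ⟪A (g s), ∫ τ in Icc (0:ℝ) s, g τ⟫
    exact integral_inner (hg.mono_set (Icc_subset_Icc_right hs.2)) _
  -- second computation
  have e2 : ∫ p, G p ∂(μ.prod μ)
      = ∫ τ, (⟪A (W t), g τ⟫ - ⟪A (W τ), g τ⟫) ∂μ := by
    rw [integral_prod_symm _ hGi]
    rw [hμ]
    refine setIntegral_congr_fun measurableSet_Icc fun τ hτ => ?_
    have : (fun s => G (s, τ)) = (Ici τ).indicator (fun s => K (s, τ)) := by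
      ext s
      simp only [hG, Set.indicator_apply, hS, mem_setOf_eq, mem_Ici]
    rw [← hμ, this, integral_indicator measurableSet_Ici, hresI τ hτ]
    show ∫ s in Icc τ t, ⟪A (g s), g τ⟫ = ⟪A (W t), g τ⟫ - ⟪A (W τ), g τ⟫
    have hsplit : W t = W τ + ∫ s in Icc τ t, g s := by
      rw [hW]
      simp only
      rw [integral_Icc_eq_integral_Ioc, integral_Icc_eq_integral_Ioc,
        integral_Icc_eq_integral_Ioc, ← Ioc_union_Ioc_eq_Ioc hτ.1 hτ.2]
      rw [setIntegral_union (Set.Ioc_disjoint_Ioc_of_le le_rfl) measurableSet_Ioc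
        ((hg.mono_set (Icc_subset_Icc_right hτ.2)).mono_set Ioc_subset_Icc_self)
        ((hg.mono_set (Icc_subset_Icc_left hτ.1)).mono_set Ioc_subset_Icc_self)]
    have hpull : ∫ s in Icc τ t, ⟪A (g s), g τ⟫ = ⟪A (∫ s in Icc τ t, g s), g τ⟫ := by
      have h1 : ∫ s in Icc τ t, ⟪A (g s), g τ⟫ = ∫ s in Icc τ t, ⟪g τ, A (g s)⟫ := by
        refine integral_congr_ae (Filter.Eventually.of_forall fun s => real_inner_comm _ _)
      rw [h1, integral_inner (A.integrable_comp (hg.mono_set (Icc_subset_Icc_left hτ.1))),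
        ← A.integral_comp_comm (hg.mono_set (Icc_subset_Icc_left hτ.1))]
      exact real_inner_comm _ _
    calc ∫ s in Icc τ t, ⟪A (g s), g τ⟫ = ⟪A (∫ s in Icc τ t, g s), g τ⟫ := hpull
    _ = ⟪A (W t) - A (W τ), g τ⟫ := by rw [hsplit]; rw [map_add]; rw [add_sub_cancel_left]
    _ = ⟪A (W t), g τ⟫ - ⟪A (W τ), g τ⟫ := inner_sub_left _ _ _
  -- integrabilities for splitting
  have hi1 : Integrable (fun τ => ⟪A (W t), g τ⟫) μ := hgi.const_inner _
  have hi2 : Integrable (fun τ => ⟪A (W τ), g τ⟫) μ := by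
    refine Integrable.mono' (hgi.norm.const_mul (‖A‖ * M))
      ((A.continuous.comp_aestronglyMeasurable hWm).inner hgi.1) ?_
    rw [hμ]
    filter_upwards [ae_restrict_mem measurableSet_Icc] with τ hτ
    calc ‖⟪A (W τ), g τ⟫‖ ≤ ‖A (W τ)‖ * ‖g τ‖ := norm_inner_le_norm _ _
    _ ≤ (‖A‖ * M) * ‖g τ‖ := by
        refine mul_le_mul_of_nonneg_right ?_ (norm_nonneg _)
        calc ‖A (W τ)‖ ≤ ‖A‖ * ‖W τ‖ := A.le_opNorm _
        _ ≤ ‖A‖ * M := mul_le_mul_of_nonneg_left (hM τ hτ) (norm_nonneg _)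
  have e3 : ∫ τ, (⟪A (W t), g τ⟫ - ⟪A (W τ), g τ⟫) ∂μ
      = ⟪A (W t), W t⟫ - ∫ τ, ⟪A (W τ), g τ⟫ ∂μ := by
    rw [integral_sub hi1 hi2, integral_inner hgi]
  have e4 : ∫ s, ⟪A (g s), W s⟫ ∂μ = ∫ s, ⟪A (W s), g s⟫ ∂μ := by
    refine integral_congr_ae (Filter.Eventually.of_forall fun s => ?_)
    show ⟪A (g s), W s⟫ = ⟪A (W s), g s⟫
    rw [hsym]; exact real_inner_comm _ _
  have := e1.symm.trans e2
  rw [e3, e4] at this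
  have : ⟪A (W t), W t⟫ = 2 * ∫ s, ⟪A (W s), g s⟫ ∂μ := by linarith
  exact this

theorem solution_sensitivity_A0_coercive
    {H : Type*} [NormedAddCommGroup H] [InnerProductSpace ℝ H] [CompleteSpace H]
    (T : ℝ) (hT : 0 < T) (A₀ A₁ : H →L[ℝ] H)
    (hA₀sym : ∀ x y : H, ⟪A₀ x, y⟫ = ⟪x, A₀ y⟫)
    (hA₁sym : ∀ x y : H, ⟪A₁ x, y⟫ = ⟪x, A₁ y⟫)
    (hA₀pos : ∀ x : H, 0 ≤ ⟪A₀ x, x⟫)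
    (hA₁pos : ∀ x : H, 0 ≤ ⟪A₁ x, x⟫)
    (f : ℝ → H) (hf : ContinuousOn f (Icc 0 T))
    (C : ℝ → Set H)
    (hC : ∀ t ∈ Icc (0:ℝ) T, (C t).Nonempty ∧ Convex ℝ (C t))
    (α₀ : ℝ) (hα₀ : 0 < α₀)
    (hcoer : ∀ x : H, α₀ * ‖x‖ ^ 2 ≤ ⟪A₀ x, x⟫)
    (x₀ y₀ : H) (hx₀ : x₀ ∈ C 0) (hy₀ : y₀ ∈ C 0)
    (x y vx vy : ℝ → H)
    (hx : SweepSol T A₀ A₁ f C x₀ x vx)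
    (hy : SweepSol T A₀ A₁ f C y₀ y vy) :
    ∀ t ∈ Icc (0:ℝ) T, ‖x t - y t‖ ≤ Real.sqrt (‖A₀‖ / α₀) * ‖x₀ - y₀‖ := by
  obtain ⟨hvx, hxeq, hxae⟩ := hx
  obtain ⟨hvy, hyeq, hyae⟩ := hy
  set g : ℝ → H := fun s => vx s - vy s with hg
  set w₀ : H := x₀ - y₀ with hw₀
  have hgT : IntegrableOn g (Icc 0 T) := hvx.sub hvy
  set W : ℝ → H := fun s => ∫ τ in Icc (0:ℝ) s, g τ with hWdef
  -- difference representation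
  have hdiff : ∀ s ∈ Icc (0:ℝ) T, x s - y s = w₀ + W s := by
    intro s hs
    have hvxi : IntervalIntegrable vx volume 0 s := by
      rw [intervalIntegrable_iff_integrableOn_Ioc_of_le hs.1]
      exact (hvx.mono_set (Icc_subset_Icc_right hs.2)).mono_set Ioc_subset_Icc_self
    have hvyi : IntervalIntegrable vy volume 0 s := by
      rw [intervalIntegrable_iff_integrableOn_Ioc_of_le hs.1]
      exact (hvy.mono_set (Icc_subset_Icc_right hs.2)).mono_set Ioc_subset_Icc_self
    rw [hxeq s hs, hyeq s hs]
    have : W s = (∫ τ in (0:ℝ)..s, vx τ) - ∫ τ in (0:ℝ)..s, vy τ := by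
      rw [← intervalIntegral.integral_sub hvxi hvyi, hWdef]
      simp only
      rw [integral_Icc_eq_integral_Ioc, intervalIntegral.integral_of_le hs.1]
    rw [this, hw₀]; abel
  -- key a.e. inequality
  have hkey : ∀ᵐ s ∂(volume.restrict (Icc (0:ℝ) T)), ⟪A₀ (x s - y s), g s⟫ ≤ 0 := by
    filter_upwards [hxae, hyae] with s hxs hys
    obtain ⟨hxC, hxin⟩ := hxs
    obtain ⟨hyC, hyin⟩ := hys
    have h1 := hxin (vy s) hyC
    have h2 := hyin (vx s) hxC
    have e1 : vy s - vx s = -(g s) := by rw [hg]; simp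
    have e2 : vx s - vy s = g s := rfl
    rw [e1, inner_neg_right] at h1
    rw [e2] at h2
    have h3 : 0 ≤ ⟪(A₁ (vy s) + A₀ (y s) - f s) - (A₁ (vx s) + A₀ (x s) - f s), g s⟫ := by
      rw [inner_sub_left]; linarith
    have e3 : (A₁ (vy s) + A₀ (y s) - f s) - (A₁ (vx s) + A₀ (x s) - f s)
        = -(A₁ (g s)) - A₀ (x s - y s) := by
      rw [hg]; simp only [map_sub]; abel
    rw [e3, inner_sub_left, inner_neg_left] at h3
    have := hA₁pos (g s)
    linarith
  intro t ht
  have hgt : IntegrableOn g (Icc 0 t) := hgT.mono_set (Icc_subset_Icc_right ht.2)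
  -- integrability of the integrands on Icc 0 t
  set μ := volume.restrict (Icc (0:ℝ) t) with hμ
  have hgi : Integrable g μ := hgt
  have hWcont : ContinuousOn W (Icc 0 t) := intervalIntegral.continuousOn_primitive_Icc hgt
  have hWm : AEStronglyMeasurable W μ := hWcont.aestronglyMeasurable measurableSet_Icc
  obtain ⟨M, hM⟩ := isCompact_Icc.exists_bound_of_continuousOn hWcont
  have hi1 : Integrable (fun s => ⟪A₀ w₀, g s⟫) μ := hgi.const_inner _
  have hi2 : Integrable (fun s => ⟪A₀ (W s), g s⟫) μ := by
    refine Integrable.mono' (hgi.norm.const_mul (‖A₀‖ * M))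
      ((A₀.continuous.comp_aestronglyMeasurable hWm).inner hgi.1) ?_
    rw [hμ]
    filter_upwards [ae_restrict_mem measurableSet_Icc] with τ hτ
    calc ‖⟪A₀ (W τ), g τ⟫‖ ≤ ‖A₀ (W τ)‖ * ‖g τ‖ := norm_inner_le_norm _ _
    _ ≤ (‖A₀‖ * M) * ‖g τ‖ := by
        refine mul_le_mul_of_nonneg_right ?_ (norm_nonneg _)
        calc ‖A₀ (W τ)‖ ≤ ‖A₀‖ * ‖W τ‖ := A₀.le_opNorm _
        _ ≤ ‖A₀‖ * M := mul_le_mul_of_nonneg_left (hM τ hτ) (norm_nonneg _)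
  -- the three identities
  have hquad : ⟪A₀ (W t), W t⟫ = 2 * ∫ s, ⟪A₀ (W s), g s⟫ ∂μ :=
    fubini_quad A₀ hA₀sym t ht.1 g hgt
  have hlin : ⟪A₀ w₀, W t⟫ = ∫ s, ⟪A₀ w₀, g s⟫ ∂μ := (integral_inner hgi _).symm
  -- nonpositivity of the combined integral
  have hnonpos : (∫ s, ⟪A₀ w₀, g s⟫ ∂μ) + ∫ s, ⟪A₀ (W s), g s⟫ ∂μ ≤ 0 := by
    rw [← integral_add hi1 hi2]
    refine integral_nonpos_of_ae ?_
    have hsub : ∀ᵐ s ∂μ, ⟪A₀ (x s - y s), g s⟫ ≤ 0 := by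
      rw [hμ]
      exact ae_restrict_of_ae_restrict_of_subset (Icc_subset_Icc_right ht.2) hkey
    rw [hμ]
    filter_upwards [ae_restrict_mem measurableSet_Icc,
      ae_restrict_of_ae_restrict_of_subset (Icc_subset_Icc_right ht.2) hkey] with s hs hle
    have : ⟪A₀ w₀, g s⟫ + ⟪A₀ (W s), g s⟫ = ⟪A₀ (x s - y s), g s⟫ := by
      rw [hdiff s ⟨hs.1, hs.2.trans ht.2⟩, map_add, inner_add_left]
    simpa [this] using hle
  -- expand the quadratic form
  have hxy : x t - y t = w₀ + W t := hdiff t ht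
  have hexp : ⟪A₀ (x t - y t), x t - y t⟫
      = ⟪A₀ w₀, w₀⟫ + 2 * ⟪A₀ w₀, W t⟫ + ⟪A₀ (W t), W t⟫ := by
    rw [hxy, map_add, inner_add_left, inner_add_right, inner_add_right]
    have : ⟪A₀ (W t), w₀⟫ = ⟪A₀ w₀, W t⟫ := by
      rw [hA₀sym]; exact real_inner_comm _ _
    rw [this]; ring
  have hmono : ⟪A₀ (x t - y t), x t - y t⟫ ≤ ⟪A₀ w₀, w₀⟫ := by
    rw [hexp, hlin, hquad]; linarith
  -- conclude
  have h1 : α₀ * ‖x t - y t‖ ^ 2 ≤ ⟪A₀ w₀, w₀⟫ := le_trans (hcoer _) hmono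
  have h2 : ⟪A₀ w₀, w₀⟫ ≤ ‖A₀‖ * ‖w₀‖ ^ 2 := by
    calc ⟪A₀ w₀, w₀⟫ ≤ ‖A₀ w₀‖ * ‖w₀‖ := real_inner_le_norm _ _
    _ ≤ (‖A₀‖ * ‖w₀‖) * ‖w₀‖ := mul_le_mul_of_nonneg_right (A₀.le_opNorm _) (norm_nonneg _)
    _ = ‖A₀‖ * ‖w₀‖ ^ 2 := by ring
  have h3 : ‖x t - y t‖ ^ 2 ≤ (‖A₀‖ / α₀) * ‖w₀‖ ^ 2 := by
    rw [div_mul_eq_mul_div, le_div_iff₀ hα₀]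
    nlinarith
  calc ‖x t - y t‖ = Real.sqrt (‖x t - y t‖ ^ 2) := (Real.sqrt_sq (norm_nonneg _)).symm
  _ ≤ Real.sqrt ((‖A₀‖ / α₀) * ‖w₀‖ ^ 2) := Real.sqrt_le_sqrt h3
  _ = Real.sqrt (‖A₀‖ / α₀) * ‖w₀‖ := by
      rw [Real.sqrt_mul (div_nonneg (norm_nonneg _) hα₀.le), Real.sqrt_sq (norm_nonneg _)]
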